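/- Let h = h_{1,1} be as defined. Then for all natural numbers n, h(2n) = ∑_{i=0}^{n} h(i). -/

import Mathlib

/-- For the sequence `h = h_{1,1}` we have `h (2n) = ∑_{i=0}^{n} h i`. -/
theorem stmt1 (h : ℤ → ℕ)
    (hinit : ∀ n : ℤ, n ≤ 1 → h n = 1)
    (hrec : ∀ n : ℤ, 2 ≤ n → h n = h (n - (h (n - 1) : ℤ)) + h (n - 2)) :
    ∀ n : ℕ, h (2 * n) = ∑ i ∈ Finset.range (n + 1), h i := by
  -- h is everywhere positive
  have hpos : ∀ n : ℤ, 1 ≤ h n := by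
    have key : ∀ N : ℕ, ∀ n : ℤ, n ≤ N → 1 ≤ h n := by
      intro N
      induction N with
      | zero => intro n hn; rw [hinit n (by exact_mod_cast by omega)]
      | succ N ih =>
        intro n hn
        rcases le_or_gt n N with hle | hgt
        · exact ih n hle
        · rcases le_or_gt n 1 with h1 | h1
          · rw [hinit n h1]
          · rw [hrec n (by omega)]
            have := ih (n - 2) (by push_cast at hn ⊢; omega)
            omega
    intro n
    rcases le_or_gt n 0 with hn | hn
    · rw [hinit n (by omega)]
    · exact key n.toNat n (by omega)
  -- h n ≥ 2 for n ≥ 2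
  have h2 : ∀ n : ℤ, 2 ≤ n → 2 ≤ h n := by
    intro n hn
    rw [hrec n hn]
    have := hpos (n - (h (n - 1) : ℤ))
    have := hpos (n - 2)
    omega
  -- sum lower bound
  have hS : ∀ m : ℕ, 1 ≤ m → 2 * m ≤ ∑ i ∈ Finset.range (m + 1), h i := by
    intro m hm
    induction m with
    | zero => omega
    | succ m ih =>
      rw [Finset.sum_range_succ]
      rcases Nat.eq_zero_or_pos m with rfl | hm'
      · simp [Finset.sum_range_succ, hinit 0 (by norm_num), hinit 1 le_rfl]
      · have hh := h2 ((m + 1 : ℕ) : ℤ) (by exact_mod_cast by omega)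
        have := ih hm'
        omega
  -- main joint induction
  have main : ∀ n : ℕ,
      h (2 * (n : ℤ)) = ∑ i ∈ Finset.range (n + 1), h i ∧
      h (2 * (n : ℤ) + 1) = n + 1 := by
    intro n
    induction n with
    | zero =>
      constructor
      · simp [hinit 0 (by norm_num)]
      · simp [hinit 1 le_rfl]
    | succ n ih =>
      obtain ⟨ih1, ih2⟩ := ih
      have e1 : h (2 * ((n : ℤ) + 1)) = ∑ i ∈ Finset.range (n + 2), h i := by
        have hr := hrec (2 * (n : ℤ) + 2) (by omega)
        have ea : (2 * (n : ℤ) + 2) - 1 = 2 * (n : ℤ) + 1 := by ring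
        have eb : (2 * (n : ℤ) + 2) - 2 = 2 * (n : ℤ) := by ring
        rw [ea, eb, ih2] at hr
        have ec : (2 * (n : ℤ) + 2) - ((n + 1 : ℕ) : ℤ) = (n : ℤ) + 1 := by
          push_cast; ring
        rw [ec, ih1] at hr
        have ed : 2 * ((n : ℤ) + 1) = 2 * (n : ℤ) + 2 := by ring
        rw [ed, hr, Finset.sum_range_succ (fun i => h i) (n + 1)]
        have : ((n + 1 : ℕ) : ℤ) = (n : ℤ) + 1 := by push_cast; ring
        rw [this]
        omega
      have ecast : ((n + 1 : ℕ) : ℤ) = (n : ℤ) + 1 := by push_cast; ring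
      refine ⟨by rw [ecast]; exact_mod_cast e1, ?_⟩
      rw [ecast]
      have hr := hrec (2 * ((n : ℤ) + 1) + 1) (by omega)
      have ea : (2 * ((n : ℤ) + 1) + 1) - 1 = 2 * ((n : ℤ) + 1) := by ring
      have eb : (2 * ((n : ℤ) + 1) + 1) - 2 = 2 * (n : ℤ) + 1 := by ring
      rw [ea, eb, ih2, e1] at hr
      have hB : 2 * (n + 1) ≤ ∑ i ∈ Finset.range (n + 2), h i := hS (n + 1) (by omega)
      have harg : (2 * ((n : ℤ) + 1) + 1) - ((∑ i ∈ Finset.range (n + 2), h i : ℕ) : ℤ) ≤ 1 := by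
        have : ((2 * (n + 1) : ℕ) : ℤ) ≤ ((∑ i ∈ Finset.range (n + 2), h i : ℕ) : ℤ) := by
          exact_mod_cast hB
        push_cast at this ⊢
        omega
      rw [hinit _ harg] at hr
      omega
  intro n
  exact (main n).1
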